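/- For every nonempty set x, there is an injection from seq¹⁻¹(x ∪ ω) into ω × seq¹⁻¹(x); consequently |seq(x)| = |ω × seq¹⁻¹(x)| (using the previous injection and Cantor–Bernstein). -/

import Mathlib

open List

private theorem recon {x : Type*} : ∀ (l l' : List (x ⊕ ℕ)),
    l.map Sum.getRight? = l'.map Sum.getRight? →
    l.filterMap Sum.getLeft? = l'.filterMap Sum.getLeft? → l = l'
  | [], [], _, _ => rfl
  | [], _ :: _, h, _ => by simp at h
  | _ :: _, [], h, _ => by simp at h
  | a :: l, a' :: l', h, h' => by
    simp only [map_cons, cons.injEq] at h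
    obtain ⟨h1, h2⟩ := h
    match a, a' with
    | .inl v, .inl v' =>
      simp only [filterMap_cons, Sum.getLeft?] at h'
      simp only [List.cons.injEq] at h'
      exact congrArg₂ _ (congrArg Sum.inl h'.1) (recon l l' h2 h'.2)
    | .inl v, .inr n => simp [Sum.getRight?] at h1
    | .inr n, .inl v => simp [Sum.getRight?] at h1
    | .inr n, .inr n' =>
      simp only [Sum.getRight?, Option.some.injEq] at h1
      subst h1
      simp only [filterMap_cons, Sum.getLeft?] at h'
      exact congrArg _ (recon l l' h2 h')

theorem injective_seq_sum_inject {x : Type*} [Nonempty x] :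
    (∃ f : {l : List (x ⊕ ℕ) // l.Nodup} → ℕ × {l : List x // l.Nodup},
        Function.Injective f) ∧
    (∃ h : List x → ℕ × {l : List x // l.Nodup}, Function.Bijective h) := by
  classical
  constructor
  · refine ⟨fun l => (Encodable.encode (l.1.map Sum.getRight?),
      ⟨l.1.filterMap Sum.getLeft?, l.2.filterMap ?_⟩), ?_⟩
    · rintro (a|a) (a'|a') b hb hb' <;>
        simp_all [Sum.getLeft?]
    · rintro ⟨l, hl⟩ ⟨l', hl'⟩ h
      simp only [Prod.mk.injEq, Subtype.mk.injEq] at h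
      exact Subtype.ext (recon l l' (Encodable.encode_injective h.1) h.2)
  · -- embedding List x ↪ ℕ × {nodup}
    have e1 : List x ↪ ℕ × {l : List x // l.Nodup} := by
      refine ⟨fun l => (Encodable.encode (l.map fun a => l.dedup.idxOf a),
        ⟨l.dedup, l.nodup_dedup⟩), ?_⟩
      intro l l' h
      simp only [Prod.mk.injEq, Subtype.mk.injEq] at h
      obtain ⟨h1, h2⟩ := h
      have h1 := Encodable.encode_injective h1
      have hlen : l.length = l'.length := by
        have := congrArg List.length h1; simpa using this
      apply List.ext_getElem hlen
      intro i hi hi'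
      have e : (l.map fun a => l.dedup.idxOf a)[i]? =
          (l'.map fun a => l'.dedup.idxOf a)[i]? := by rw [h1]
      rw [List.getElem?_map, List.getElem?_map, List.getElem?_eq_getElem hi,
        List.getElem?_eq_getElem hi'] at e
      simp only [Option.map_some, Option.some.injEq] at e
      rw [h2] at e
      have this := e
      exact (List.idxOf_inj (l := l'.dedup) (by rw [← h2, List.mem_dedup]; exact List.getElem_mem hi)
        ).mp this
    -- embedding ℕ × {nodup} ↪ List x via cardinals
    have e2 : ℕ × {l : List x // l.Nodup} ↪ List x := by
      have hc : (Cardinal.mk (ℕ × List x)) = Cardinal.mk (List x) := by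
        simp only [Cardinal.mk_prod, Cardinal.mk_nat, Cardinal.lift_aleph0,
          Cardinal.lift_id']
        exact Cardinal.aleph0_mul_eq (by
          rw [Cardinal.mk_list_eq_max_mk_aleph0]; exact le_max_right _ _)
      exact (Function.Embedding.refl ℕ |>.prodMap
        ⟨Subtype.val, Subtype.val_injective⟩).trans
        (Classical.choice (Cardinal.eq.mp hc)).toEmbedding
    obtain ⟨e⟩ := Function.Embedding.antisymm e1 e2
    exact ⟨e, e.bijective⟩
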